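/- For every natural number n and complex number a with (2a+1)_k ≠ 0 for 0 ≤ k ≤ 2n, ∑_{k=0}^{2n} (-2n)_k (a)_k 2^k / ((2a+1)_k k!) = (1/2)_n / (a+1/2)_n. -/

import Mathlib

open Finset

/-- The Pochhammer symbol (rising factorial) `(x)_k = x (x+1) ⋯ (x+k-1)`. -/
noncomputable def poch (x : ℂ) (k : ℕ) : ℂ := (ascPochhammer ℂ k).eval x

@[simp] lemma poch_zero (x : ℂ) : poch x 0 = 1 := by simp [poch]

lemma poch_succ_right (x : ℂ) (k : ℕ) : poch x (k+1) = poch x k * (x + k) := by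
  simp [poch, ascPochhammer_succ_right]

lemma poch_succ_left (x : ℂ) (k : ℕ) : poch x (k+1) = x * poch (x+1) k := by
  simp [poch, ascPochhammer_succ_left, Polynomial.eval_comp]

lemma poch_add (x : ℂ) (m k : ℕ) : poch x (m+k) = poch x m * poch (x+m) k := by
  rw [poch, ← ascPochhammer_mul]
  simp [poch, Polynomial.eval_comp]

open Nat

noncomputable def Qs (m : ℕ) (x y : ℂ) : ℂ :=
  ∑ k ∈ range (m+1), (-2 : ℂ)^k * (m.choose k : ℂ) * poch x k * poch (y + k) (m - k)

lemma Qs_rec (m : ℕ) (x y : ℂ) :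
    Qs (m+1) x y = (y + m) * Qs m x y - 2 * x * Qs m (x+1) (y+1) := by
  set g : ℕ → ℂ := fun i => (-2:ℂ)^(i+1) * (m.choose (i+1) : ℂ) * poch x (i+1) * poch (y + ((i+1:ℕ):ℂ)) (m + 1 - (i+1)) with hg
  set hh : ℕ → ℂ := fun i => (-2:ℂ)^(i+1) * (m.choose i : ℂ) * poch x (i+1) * poch (y + ((i+1:ℕ):ℂ)) (m - i) with hh'
  have h1 : Qs (m+1) x y = (∑ i ∈ range (m+1), g i + ∑ i ∈ range (m+1), hh i) + poch y (m+1) := by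
    rw [Qs, Finset.sum_range_succ', ← Finset.sum_add_distrib]
    congr 1
    · refine Finset.sum_congr rfl fun i _ => ?_
      rw [hg, hh']
      simp only []
      rw [Nat.choose_succ_succ]
      have : m + 1 - (i+1) = m - i := by omega
      rw [this]
      push_cast
      ring
    · simp
  have h2 : ∑ i ∈ range (m+1), g i + poch y (m+1) = (y + m) * Qs m x y := by
    have e1 : ∑ i ∈ range (m+1), g i + poch y (m+1)
        = ∑ k ∈ range (m+2), (-2:ℂ)^k * (m.choose k : ℂ) * poch x k * poch (y + k) (m + 1 - k) := by
      rw [Finset.sum_range_succ' (fun k => (-2:ℂ)^k * (m.choose k : ℂ) * poch x k * poch (y + k) (m + 1 - k)) (m+1)]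
      congr 1
      simp
    rw [e1, Finset.sum_range_succ]
    simp only [Nat.choose_succ_self, Nat.cast_zero, mul_zero, zero_mul, add_zero]
    rw [Qs, Finset.mul_sum]
    refine Finset.sum_congr rfl fun k hk => ?_
    rw [mem_range] at hk
    have e2 : m + 1 - k = (m - k) + 1 := by omega
    rw [e2, poch_succ_right]
    rw [Nat.cast_sub (by omega : k ≤ m)]
    ring
  have h3 : ∑ i ∈ range (m+1), hh i = -(2 * x) * Qs m (x+1) (y+1) := by
    rw [Qs, Finset.mul_sum]
    refine Finset.sum_congr rfl fun i _ => ?_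
    rw [hh']
    simp only []
    rw [poch_succ_left]
    have : y + ((i+1 : ℕ) : ℂ) = (y + 1) + (i : ℕ) := by push_cast; ring
    rw [this]
    push_cast
    ring
  rw [h1]
  have : (∑ i ∈ range (m+1), g i + ∑ i ∈ range (m+1), hh i) + poch y (m+1)
      = (∑ i ∈ range (m+1), g i + poch y (m+1)) + ∑ i ∈ range (m+1), hh i := by ring
  rw [this, h2, h3]
  ring

lemma pascalC (t s : ℕ) : (((t+1).choose (s+1) : ℕ) : ℂ) = (t.choose s : ℂ) + (t.choose (s+1) : ℂ) := by
  exact_mod_cast congrArg (Nat.cast : ℕ → ℂ) (Nat.choose_succ_succ (t) (s))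

lemma absorbC (t s : ℕ) : (((t+s).choose (s+1) : ℕ) : ℂ) * ((s:ℂ)+1) = ((t+s).choose s : ℂ) * (t:ℂ) := by
  have h := Nat.choose_succ_right_eq (t+s) s
  have h2 : t+s-s = t := by omega
  rw [h2] at h
  exact_mod_cast congrArg (Nat.cast : ℕ → ℂ) h

lemma c2key (n j e : ℕ) :
    2*((n:ℂ)-(e:ℂ)-1)*(((j+2*e+2).choose (2*e+4) : ℂ) - ((j+2*e+3).choose (2*e+4) : ℂ))
      + ((j:ℂ)+2*(e:ℂ)+1) * ((j+2*e).choose (2*e+2) : ℂ)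
      - 2*((j:ℂ)-(n:ℂ)+(e:ℂ)) * ((j+2*e+1).choose (2*e+2) : ℂ)
      + (2*(n:ℂ)+1) * ((j+2*e+1).choose (2*e+3) : ℂ) = 0 := by
  cases j with
  | zero =>
    have z1 : (0+2*e+2).choose (2*e+4) = 0 := Nat.choose_eq_zero_of_lt (by omega)
    have z2 : (0+2*e+3).choose (2*e+4) = 0 := Nat.choose_eq_zero_of_lt (by omega)
    have z3 : (0+2*e).choose (2*e+2) = 0 := Nat.choose_eq_zero_of_lt (by omega)
    have z4 : (0+2*e+1).choose (2*e+2) = 0 := Nat.choose_eq_zero_of_lt (by omega)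
    have z5 : (0+2*e+1).choose (2*e+3) = 0 := Nat.choose_eq_zero_of_lt (by omega)
    rw [z1, z2, z3, z4, z5]
    push_cast
    ring
  | succ j' =>
    have a2 : j'+1+2*e+3 = j'+2*e+4 := by omega
    have a1 : j'+1+2*e+2 = j'+2*e+3 := by omega
    have a4 : j'+1+2*e+1 = j'+2*e+2 := by omega
    have a3 : j'+1+2*e = j'+2*e+1 := by omega
    rw [a2, a1, a4, a3]
    have f1 : ((j'+2*e+4).choose (2*e+4) : ℂ) = ((j'+2*e+3).choose (2*e+3) : ℂ) + ((j'+2*e+3).choose (2*e+4) : ℂ) := by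
      have h1 : j'+2*e+4 = (j'+2*e+3)+1 := by omega
      have h2 : 2*e+4 = (2*e+3)+1 := by omega
      rw [h1, h2]; exact pascalC _ _
    have f2 : ((j'+2*e+3).choose (2*e+3) : ℂ) = ((j'+2*e+2).choose (2*e+2) : ℂ) + ((j'+2*e+2).choose (2*e+3) : ℂ) := by
      have h1 : j'+2*e+3 = (j'+2*e+2)+1 := by omega
      have h2 : 2*e+3 = (2*e+2)+1 := by omega
      rw [h1, h2]; exact pascalC _ _
    have f3 : ((j'+2*e+2).choose (2*e+3) : ℂ) * (2*(e:ℂ)+3) = ((j'+2*e+2).choose (2*e+2) : ℂ) * (j' : ℂ) := by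
      have h1 : j'+2*e+2 = j'+(2*e+2) := by omega
      have h2 : 2*e+3 = (2*e+2)+1 := by omega
      have := absorbC j' (2*e+2)
      rw [h1, h2]
      convert this using 2 <;> push_cast <;> ring
    have f4 : ((j'+2*e+2).choose (2*e+2) : ℂ) = ((j'+2*e+1).choose (2*e+1) : ℂ) + ((j'+2*e+1).choose (2*e+2) : ℂ) := by
      have h1 : j'+2*e+2 = (j'+2*e+1)+1 := by omega
      have h2 : 2*e+2 = (2*e+1)+1 := by omega
      rw [h1, h2]; exact pascalC _ _
    have f5 : ((j'+2*e+1).choose (2*e+2) : ℂ) * (2*(e:ℂ)+2) = ((j'+2*e+1).choose (2*e+1) : ℂ) * (j' : ℂ) := by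
      have h1 : j'+2*e+1 = j'+(2*e+1) := by omega
      have h2 : 2*e+2 = (2*e+1)+1 := by omega
      have := absorbC j' (2*e+1)
      rw [h1, h2]
      convert this using 2 <;> push_cast <;> ring
    push_cast
    linear_combination (2*(e:ℂ)+2-2*(n:ℂ))*f1 + (2*(e:ℂ)+2-2*(n:ℂ))*f2 + f3 - (j':ℂ)*f4 + f5
lemma c3key (n j e : ℕ) :
    2*((n:ℂ)-(e:ℂ)-1)*(((j+2*e+4).choose (2*e+5) : ℂ) - ((j+2*e+3).choose (2*e+5) : ℂ))
      - ((j:ℂ)+2*(e:ℂ)+2) * ((j+2*e+1).choose (2*e+3) : ℂ)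
      + 2*((j:ℂ)-(n:ℂ)+(e:ℂ)) * ((j+2*e+2).choose (2*e+3) : ℂ)
      - (2*(n:ℂ)+2) * ((j+2*e+2).choose (2*e+4) : ℂ) = 0 := by
  cases j with
  | zero =>
    have z1 : (0+2*e+4).choose (2*e+5) = 0 := Nat.choose_eq_zero_of_lt (by omega)
    have z2 : (0+2*e+3).choose (2*e+5) = 0 := Nat.choose_eq_zero_of_lt (by omega)
    have z3 : (0+2*e+1).choose (2*e+3) = 0 := Nat.choose_eq_zero_of_lt (by omega)
    have z4 : (0+2*e+2).choose (2*e+3) = 0 := Nat.choose_eq_zero_of_lt (by omega)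
    have z5 : (0+2*e+2).choose (2*e+4) = 0 := Nat.choose_eq_zero_of_lt (by omega)
    rw [z1, z2, z3, z4, z5]
    push_cast
    ring
  | succ j' =>
    have a1 : j'+1+2*e+4 = j'+2*e+5 := by omega
    have a2 : j'+1+2*e+3 = j'+2*e+4 := by omega
    have a3 : j'+1+2*e+1 = j'+2*e+2 := by omega
    have a4 : j'+1+2*e+2 = j'+2*e+3 := by omega
    rw [a1, a2, a4, a3]
    have f1 : ((j'+2*e+5).choose (2*e+5) : ℂ) = ((j'+2*e+4).choose (2*e+4) : ℂ) + ((j'+2*e+4).choose (2*e+5) : ℂ) := by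
      have h1 : j'+2*e+5 = (j'+2*e+4)+1 := by omega
      have h2 : 2*e+5 = (2*e+4)+1 := by omega
      rw [h1, h2]; exact pascalC _ _
    have f2 : ((j'+2*e+4).choose (2*e+4) : ℂ) = ((j'+2*e+3).choose (2*e+3) : ℂ) + ((j'+2*e+3).choose (2*e+4) : ℂ) := by
      have h1 : j'+2*e+4 = (j'+2*e+3)+1 := by omega
      have h2 : 2*e+4 = (2*e+3)+1 := by omega
      rw [h1, h2]; exact pascalC _ _
    have f3 : ((j'+2*e+3).choose (2*e+4) : ℂ) * (2*(e:ℂ)+4) = ((j'+2*e+3).choose (2*e+3) : ℂ) * (j' : ℂ) := by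
      have h1 : j'+2*e+3 = j'+(2*e+3) := by omega
      have h2 : 2*e+4 = (2*e+3)+1 := by omega
      have := absorbC j' (2*e+3)
      rw [h1, h2]
      convert this using 2 <;> push_cast <;> ring
    have f4 : ((j'+2*e+3).choose (2*e+3) : ℂ) = ((j'+2*e+2).choose (2*e+2) : ℂ) + ((j'+2*e+2).choose (2*e+3) : ℂ) := by
      have h1 : j'+2*e+3 = (j'+2*e+2)+1 := by omega
      have h2 : 2*e+3 = (2*e+2)+1 := by omega
      rw [h1, h2]; exact pascalC _ _
    have f5 : ((j'+2*e+2).choose (2*e+3) : ℂ) * (2*(e:ℂ)+3) = ((j'+2*e+2).choose (2*e+2) : ℂ) * (j' : ℂ) := by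
      have h1 : j'+2*e+2 = j'+(2*e+2) := by omega
      have h2 : 2*e+3 = (2*e+2)+1 := by omega
      have := absorbC j' (2*e+2)
      rw [h1, h2]
      convert this using 2 <;> push_cast <;> ring
    push_cast
    linear_combination (2*(n:ℂ)-2*(e:ℂ)-2)*f1 + (2*(n:ℂ)-2*(e:ℂ)-2)*f2 - f3 + (j':ℂ)*f4 - f5

def Aco (n j d : ℕ) : ℕ := (2*n).descFactorial (n+d) * (j+2*d-2).choose (2*d)

noncomputable def Bco (n j : ℕ) : ℕ → ℂ
  | 0 => ((2*n+1).descFactorial (n+1) : ℂ) * (1 - (j:ℂ))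
  | (e+1) => -(((2*n+1).descFactorial (n+2+e) : ℂ) * ((j+2*e+1).choose (2*e+3) : ℂ))

lemma Aco_zero (n j : ℕ) : Aco n j 0 = (2*n).descFactorial n := by
  simp [Aco]

lemma Aco_succ (n j e : ℕ) : Aco n j (e+1) = (2*n).descFactorial (n+e+1) * (j+2*e).choose (2*e+2) := by
  have h : j+2*(e+1)-2 = j+2*e := by omega
  have h2 : n + (e+1) = n+e+1 := by omega
  have h3 : 2*(e+1) = 2*e+2 := by omega
  rw [Aco, h, h2, h3]

lemma Aco_top (n j : ℕ) : Aco n j (n+1) = 0 := by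
  rw [Aco, Nat.descFactorial_eq_zero_iff_lt.2 (by omega), zero_mul]

lemma Bco_top (n j : ℕ) : Bco n j (n+1) = 0 := by
  rw [Bco, Nat.descFactorial_eq_zero_iff_lt.2 (by omega)]
  simp

-- descFactorial step lemmas
lemma dF1 (n e : ℕ) (h : e < n) :
    (2*n).descFactorial (n+e+2) = (n-e-1) * (2*n).descFactorial (n+e+1) := by
  have := Nat.descFactorial_succ (2*n) (n+e+1)
  rw [this]
  congr 1
  omega

lemma dF2 (n e : ℕ) :
    (2*n+1).descFactorial (n+2+e) = (2*n+1) * (2*n).descFactorial (n+e+1) := by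
  have := Nat.succ_descFactorial_succ (2*n) (n+e+1)
  have h : n+2+e = (n+e+1)+1 := by omega
  rw [h]
  exact this

lemma dF3 (n : ℕ) : (2*n).descFactorial (n+1) = n * (2*n).descFactorial n := by
  have := Nat.descFactorial_succ (2*n) n
  rw [this]
  congr 1
  omega

lemma dF4 (n : ℕ) : (2*n+1).descFactorial (n+1) = (2*n+1) * (2*n).descFactorial n := by
  exact Nat.succ_descFactorial_succ (2*n) n

lemma dF5 (n e : ℕ) :
    (2*(n+1)).descFactorial ((n+1)+e+1) = (2*n+2) * (2*n+1).descFactorial (n+e+1) := by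
  have := Nat.succ_descFactorial_succ (2*n+1) (n+e+1)
  have h : 2*(n+1) = (2*n+1)+1 := by omega
  have h2 : (n+1)+e+1 = (n+e+1)+1 := by omega
  rw [h, h2]
  exact this

lemma dF6 (n : ℕ) : (2*(n+1)).descFactorial (n+1) = 2 * (2*n+1).descFactorial (n+1) := by
  have h : 2*(n+1) = (2*n+1)+1 := by omega
  have h2 : (2*n+1).descFactorial (n+1) = (n+1) * (2*n+1).descFactorial n := by
    rw [Nat.descFactorial_succ]
    congr 1
    omega
  rw [h, Nat.succ_descFactorial_succ (2*n+1) n, h2]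
  ring

lemma dF7 (n e : ℕ) (h : e < n) :
    (2*n+1).descFactorial (n+2+e+1) = (n-e-1) * (2*n+1).descFactorial (n+2+e) := by
  have := Nat.descFactorial_succ (2*n+1) (n+2+e)
  rw [this]
  congr 1
  omega

lemma dF8 (n : ℕ) : (2*n+1).descFactorial (n+2) = n * (2*n+1).descFactorial (n+1) := by
  have := Nat.descFactorial_succ (2*n+1) (n+1)
  have h : n+2 = (n+1)+1 := by omega
  rw [h, this]
  congr 1
  omega

lemma c2point (n j d : ℕ) (hd : d ≤ n) :
    2*((Aco n j (d+1) : ℂ) - (Aco n (j+1) (d+1) : ℂ))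
      + (((j:ℂ)+2*(d:ℂ)-1) * (Aco n j d : ℂ) - 2*((j:ℂ)-1-(n:ℂ)+(d:ℂ)) * (Aco n (j+1) d : ℂ))
    = Bco n j d := by
  cases d with
  | zero =>
    rw [Aco_succ n j 0, Aco_succ n (j+1) 0, Aco_zero, Aco_zero]
    have h1 : n+0+1 = n+1 := by omega
    have h2 : j+2*0 = j := by omega
    have h3 : 2*0+2 = 2 := by omega
    have h4 : j+1+2*0 = j+1 := by omega
    rw [h1, h2, h3, h4, dF3]
    simp only [Bco]
    rw [dF4]
    have fp : ((j+1).choose 2 : ℂ) = (j:ℂ) + ((j.choose 2 : ℕ) : ℂ) := by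
      have := pascalC j 1
      rw [Nat.choose_one_right] at this
      exact_mod_cast this
    push_cast
    push_cast at fp
    linear_combination (-2*(n:ℂ)*(((2*n).descFactorial n : ℕ):ℂ)) * fp
  | succ e =>
    have he : e < n := by omega
    rw [Aco_succ n j (e+1), Aco_succ n (j+1) (e+1), Aco_succ n j e, Aco_succ n (j+1) e]
    have h1 : n+(e+1)+1 = n+e+2 := by omega
    have h2 : j+2*(e+1) = j+2*e+2 := by omega
    have h3 : 2*(e+1)+2 = 2*e+4 := by omega
    have h4 : j+1+2*(e+1) = j+2*e+3 := by omega
    have h5 : j+1+2*e = j+2*e+1 := by omega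
    rw [h1, h2, h3, h4, h5, dF1 n e he]
    simp only [Bco]
    rw [dF2]
    have hc : ((n-e-1 : ℕ) : ℂ) = (n:ℂ)-(e:ℂ)-1 := by
      have h : n-e-1+(e+1) = n := by omega
      have := congrArg (Nat.cast : ℕ → ℂ) h
      push_cast at this
      linear_combination this
    push_cast
    rw [hc]
    linear_combination (((2*n).descFactorial (n+e+1) : ℕ):ℂ) * c2key n j e

lemma c3top (n j : ℕ) : 2*(Bco n j 0 - Bco n (j+1) 0) = (Aco (n+1) j 0 : ℂ) := by
  rw [Aco_zero]
  simp only [Bco]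
  rw [dF6]
  push_cast
  ring

lemma c3point (n j e : ℕ) (he : e ≤ n) :
    2*(Bco n j (e+1) - Bco n (j+1) (e+1))
      + (((j:ℂ)+2*(e:ℂ)) * Bco n j e - 2*((j:ℂ)-1-(n:ℂ)+(e:ℂ)) * Bco n (j+1) e)
    = (Aco (n+1) j (e+1) : ℂ) := by
  cases e with
  | zero =>
    simp only [Bco]
    rw [Aco_succ (n+1) j 0]
    have h1 : n+2+0 = n+2 := by omega
    have h2 : j+2*0+1 = j+1 := by omega
    have h3 : 2*0+3 = 3 := by omega
    have h4 : j+1+2*0+1 = j+2 := by omega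
    have h5 : (n+1)+0+1 = n+2 := by omega
    have h6 : j+2*0 = j := by omega
    have h7 : 2*0+2 = 2 := by omega
    have h8 : 2*(n+1) = 2*n+2 := by omega
    rw [h1, h2, h3, h4, h5, h6, h7, h8, dF8]
    have h9 : (2*n+2).descFactorial (n+2) = (2*n+2) * (2*n+1).descFactorial (n+1) := by
      have := dF5 n 0
      have ha : (n+1)+0+1 = n+2 := by omega
      have hb : n+0+1 = n+1 := by omega
      have hc : 2*(n+1) = 2*n+2 := by omega
      rw [ha, hb, hc] at this
      exact this
    rw [h9]
    have fp2 : ((j+2).choose 3 : ℂ) = ((j+1).choose 2 : ℂ) + ((j+1).choose 3 : ℂ) := by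
      have h1 : j+2 = (j+1)+1 := by omega
      rw [h1]
      exact_mod_cast pascalC (j+1) 2
    have fp3 : ((j+1).choose 2 : ℂ) = (j:ℂ) + ((j.choose 2 : ℕ) : ℂ) := by
      have := pascalC j 1
      rw [Nat.choose_one_right] at this
      exact_mod_cast this
    have fq : ((j.choose 2 : ℕ) : ℂ) * 2 = (j:ℂ) * ((j:ℂ)-1) := by
      cases j with
      | zero => simp
      | succ j' =>
        have := absorbC j' 1
        rw [Nat.choose_one_right] at this
        have h1 : j'+1 = j'+1 := rfl
        push_cast
        push_cast at this
        linear_combination this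
    push_cast
    push_cast at fp2 fp3 fq
    linear_combination (2*(n:ℂ)*(((2*n+1).descFactorial (n+1) : ℕ):ℂ))*fp2
      + (2*(n:ℂ)*(((2*n+1).descFactorial (n+1) : ℕ):ℂ))*fp3
      - (((2*n+1).descFactorial (n+1) : ℕ):ℂ)*fq
  | succ e' =>
    have he' : e' < n := by omega
    simp only [Bco]
    rw [Aco_succ (n+1) j (e'+1)]
    have h1 : n+2+(e'+1) = (n+2+e')+1 := by omega
    have h2 : j+2*(e'+1)+1 = j+2*e'+3 := by omega
    have h3 : 2*(e'+1)+3 = 2*e'+5 := by omega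
    have h4 : j+1+2*(e'+1)+1 = j+2*e'+4 := by omega
    have h5 : (n+1)+(e'+1)+1 = n+e'+3 := by omega
    have h6 : j+2*(e'+1) = j+2*e'+2 := by omega
    have h7 : 2*(e'+1)+2 = 2*e'+4 := by omega
    have h8 : j+1+2*e'+1 = j+2*e'+2 := by omega
    rw [h1, h2, h3, h4, h5, h6, h7, h8]
    rw [dF7 n e' he']
    have h9 : (2*(n+1)).descFactorial (n+e'+3) = (2*n+2) * (2*n+1).descFactorial (n+2+e') := by
      have := dF5 n (e'+1)
      have ha : (n+1)+(e'+1)+1 = n+e'+3 := by omega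
      have hb : n+(e'+1)+1 = n+2+e' := by omega
      have hc : 2*(n+1) = 2*(n+1) := rfl
      rw [ha, hb] at this
      exact this
    rw [h9]
    have hc : ((n-e'-1 : ℕ) : ℂ) = (n:ℂ)-(e':ℂ)-1 := by
      have h : n-e'-1+(e'+1) = n := by omega
      have := congrArg (Nat.cast : ℕ → ℂ) h
      push_cast at this
      linear_combination this
    push_cast
    rw [hc]
    linear_combination (((2*n+1).descFactorial (n+2+e') : ℕ):ℂ) * c3key n j e'

noncomputable def Ee (n j : ℕ) (a : ℂ) : ℂ := ∑ d ∈ range (n+1), (Aco n j d : ℂ) * poch (a+1) (n-d)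
noncomputable def Oo (n j : ℕ) (a : ℂ) : ℂ := ∑ d ∈ range (n+1), Bco n j d * poch (a+1) (n-d)

lemma step_even (n j : ℕ) (a : ℂ) :
    (2*a+1+(j:ℂ)+2*(n:ℂ)) * Ee n j a - 2*(a+(j:ℂ)) * Ee n (j+1) a = Oo n j a := by
  have expand : (2*a+1+(j:ℂ)+2*(n:ℂ)) * Ee n j a - 2*(a+(j:ℂ)) * Ee n (j+1) a
      = (∑ d ∈ range (n+1), 2*((Aco n j d : ℂ) - (Aco n (j+1) d : ℂ)) * poch (a+1) (n-d+1))
        + ∑ d ∈ range (n+1), (((j:ℂ)+2*(d:ℂ)-1) * (Aco n j d : ℂ)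
            - 2*((j:ℂ)-1-(n:ℂ)+(d:ℂ)) * (Aco n (j+1) d : ℂ)) * poch (a+1) (n-d) := by
    rw [Ee, Ee, Finset.mul_sum, Finset.mul_sum, ← Finset.sum_sub_distrib, ← Finset.sum_add_distrib]
    refine Finset.sum_congr rfl fun d hd => ?_
    rw [mem_range] at hd
    rw [poch_succ_right]
    have hc : ((n-d : ℕ) : ℂ) = (n:ℂ)-(d:ℂ) := by
      have h : n-d+d = n := by omega
      have := congrArg (Nat.cast : ℕ → ℂ) h
      push_cast at this
      linear_combination this
    rw [hc]
    ring
  have shiftU : (∑ d ∈ range (n+1), 2*((Aco n j d : ℂ) - (Aco n (j+1) d : ℂ)) * poch (a+1) (n-d+1))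
      = ∑ d ∈ range (n+1), 2*((Aco n j (d+1) : ℂ) - (Aco n (j+1) (d+1) : ℂ)) * poch (a+1) (n-d) := by
    rw [Finset.sum_range_succ' (fun d => 2*((Aco n j d : ℂ) - (Aco n (j+1) d : ℂ)) * poch (a+1) (n-d+1)) n]
    rw [Finset.sum_range_succ (fun d => 2*((Aco n j (d+1) : ℂ) - (Aco n (j+1) (d+1) : ℂ)) * poch (a+1) (n-d)) n]
    have h0 : 2*((Aco n j 0 : ℂ) - (Aco n (j+1) 0 : ℂ)) * poch (a+1) (n-0+1) = 0 := by
      rw [Aco_zero, Aco_zero]; ring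
    have htop : 2*((Aco n j (n+1) : ℂ) - (Aco n (j+1) (n+1) : ℂ)) * poch (a+1) (n-n) = 0 := by
      rw [Aco_top, Aco_top]; ring
    rw [h0, htop, add_zero, add_zero]
    refine Finset.sum_congr rfl fun e he => ?_
    rw [mem_range] at he
    have h : n-(e+1)+1 = n-e := by omega
    rw [h]
  rw [expand, shiftU, ← Finset.sum_add_distrib, Oo]
  refine Finset.sum_congr rfl fun d hd => ?_
  rw [mem_range] at hd
  rw [← c2point n j d (by omega)]
  ring

lemma step_odd (n j : ℕ) (a : ℂ) :
    (2*a+2+(j:ℂ)+2*(n:ℂ)) * Oo n j a - 2*(a+(j:ℂ)) * Oo n (j+1) a = Ee (n+1) j a := by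
  have expand : (2*a+2+(j:ℂ)+2*(n:ℂ)) * Oo n j a - 2*(a+(j:ℂ)) * Oo n (j+1) a
      = (∑ d ∈ range (n+1), 2*(Bco n j d - Bco n (j+1) d) * poch (a+1) (n-d+1))
        + ∑ d ∈ range (n+1), (((j:ℂ)+2*(d:ℂ)) * Bco n j d
            - 2*((j:ℂ)-1-(n:ℂ)+(d:ℂ)) * Bco n (j+1) d) * poch (a+1) (n-d) := by
    rw [Oo, Oo, Finset.mul_sum, Finset.mul_sum, ← Finset.sum_sub_distrib, ← Finset.sum_add_distrib]
    refine Finset.sum_congr rfl fun d hd => ?_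
    rw [mem_range] at hd
    rw [poch_succ_right]
    have hc : ((n-d : ℕ) : ℂ) = (n:ℂ)-(d:ℂ) := by
      have h : n-d+d = n := by omega
      have := congrArg (Nat.cast : ℕ → ℂ) h
      push_cast at this
      linear_combination this
    rw [hc]
    ring
  have splitW : (∑ d ∈ range (n+1), 2*(Bco n j d - Bco n (j+1) d) * poch (a+1) (n-d+1))
      = 2*(Bco n j 0 - Bco n (j+1) 0) * poch (a+1) (n+1)
        + ∑ e ∈ range (n+1), 2*(Bco n j (e+1) - Bco n (j+1) (e+1)) * poch (a+1) (n-e) := by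
    rw [Finset.sum_range_succ' (fun d => 2*(Bco n j d - Bco n (j+1) d) * poch (a+1) (n-d+1)) n]
    rw [Finset.sum_range_succ (fun e => 2*(Bco n j (e+1) - Bco n (j+1) (e+1)) * poch (a+1) (n-e)) n]
    have htop : 2*(Bco n j (n+1) - Bco n (j+1) (n+1)) * poch (a+1) (n-n) = 0 := by
      rw [Bco_top, Bco_top]; ring
    rw [htop, add_zero]
    have h0 : n-0+1 = n+1 := by omega
    rw [h0, add_comm]
    congr 1
    refine Finset.sum_congr rfl fun e he => ?_
    rw [mem_range] at he
    have h : n-(e+1)+1 = n-e := by omega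
    rw [h]
  have expandR : Ee (n+1) j a
      = (Aco (n+1) j 0 : ℂ) * poch (a+1) (n+1)
        + ∑ e ∈ range (n+1), (Aco (n+1) j (e+1) : ℂ) * poch (a+1) (n-e) := by
    rw [Ee, Finset.sum_range_succ' (fun d => (Aco (n+1) j d : ℂ) * poch (a+1) (n+1-d)) (n+1)]
    have h1 : ∑ e ∈ range (n+1), (Aco (n+1) j (e+1) : ℂ) * poch (a+1) (n+1-(e+1))
        = ∑ e ∈ range (n+1), (Aco (n+1) j (e+1) : ℂ) * poch (a+1) (n-e) := by
      refine Finset.sum_congr rfl fun e he => ?_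
      rw [mem_range] at he
      have h : n+1-(e+1) = n-e := by omega
      rw [h]
    have h2 : (Aco (n+1) j 0 : ℂ) * poch (a+1) (n+1-0) = (Aco (n+1) j 0 : ℂ) * poch (a+1) (n+1) := by
      norm_num
    rw [h1, h2, add_comm]
  rw [expand, splitW, expandR, c3top, add_assoc, ← Finset.sum_add_distrib]
  congr 1
  refine Finset.sum_congr rfl fun e he => ?_
  rw [mem_range] at he
  rw [← c3point n j e (by omega)]
  ring

lemma QE (a : ℂ) (n : ℕ) :
    (∀ j : ℕ, Qs (2*n) (a+j) (2*a+1+j) = Ee n j a)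
      ∧ (∀ j : ℕ, Qs (2*n+1) (a+j) (2*a+1+j) = Oo n j a) := by
  induction n with
  | zero =>
    constructor
    · intro j
      simp [Qs, Ee, Aco]
    · intro j
      have h := Qs_rec 0 (a+j) (2*a+1+j)
      have hq : Qs 0 (a+j) (2*a+1+j) = 1 := by simp [Qs]
      have hq2 : Qs 0 (a+j+1) (2*a+1+j+1) = 1 := by simp [Qs]
      have h2 : (2*0:ℕ)+1 = 0+1 := by norm_num
      rw [show (2*0:ℕ)+1 = 0+1 from by norm_num]
      rw [h, hq, hq2, Oo]
      simp [Bco]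
      ring
  | succ n ih =>
    have heven : ∀ j : ℕ, Qs (2*(n+1)) (a+j) (2*a+1+j) = Ee (n+1) j a := by
      intro j
      have h := Qs_rec (2*n+1) (a+j) (2*a+1+j)
      rw [show 2*(n+1) = (2*n+1)+1 from by ring, h, ih.2 j]
      have hx : (a+j)+1 = a+((j+1:ℕ):ℂ) := by push_cast; ring
      have hy : (2*a+1+j)+1 = 2*a+1+((j+1:ℕ):ℂ) := by push_cast; ring
      rw [hx, hy, ih.2 (j+1)]
      rw [← step_odd n j a]
      push_cast
      ring
    refine ⟨heven, ?_⟩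
    intro j
    have h := Qs_rec (2*(n+1)) (a+j) (2*a+1+j)
    rw [show 2*(n+1)+1 = 2*(n+1)+1 from rfl, h, heven j]
    have hx : (a+j)+1 = a+((j+1:ℕ):ℂ) := by push_cast; ring
    have hy : (2*a+1+j)+1 = 2*a+1+((j+1:ℕ):ℂ) := by push_cast; ring
    rw [hx, hy, heven (j+1)]
    rw [← step_even (n+1) j a]
    push_cast
    ring

lemma poch_neg (N : ℕ) : ∀ k, k ≤ N → poch (-(N:ℂ)) k = (-1)^k * (N.descFactorial k : ℂ) := by
  intro k
  induction k with
  | zero => simp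
  | succ k ihk =>
    intro hk
    rw [poch_succ_right, ihk (by omega), Nat.descFactorial_succ]
    have hc : ((N-k : ℕ) : ℂ) = (N:ℂ)-(k:ℂ) := by
      have h : N-k+k = N := by omega
      have := congrArg (Nat.cast : ℕ → ℂ) h
      push_cast at this
      linear_combination this
    push_cast
    rw [hc]
    ring

lemma poch_double (a : ℂ) (n : ℕ) :
    poch (2*a+1) (2*n) = 4^n * poch (a+1/2) n * poch (a+1) n := by
  induction n with
  | zero => simp
  | succ n ih =>
    have h : 2*(n+1) = (2*n+1)+1 := by ring
    rw [h, poch_succ_right, show (2*n+1:ℕ) = (2*n)+1 from rfl, poch_succ_right, ih,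
      poch_succ_right, poch_succ_right]
    push_cast
    ring

lemma poch_half (n : ℕ) : poch (1/2) n * 4^n * (n ! : ℂ) = ((2*n)! : ℂ) := by
  induction n with
  | zero => simp
  | succ n ih =>
    rw [poch_succ_right]
    have h : (2*(n+1)) = (2*n+1)+1 := by ring
    rw [h, Nat.factorial_succ, Nat.factorial_succ, show (2*n+1:ℕ) = (2*n)+1 from rfl,
      Nat.factorial_succ]
    push_cast
    push_cast at ih
    linear_combination (((2:ℂ)*n+2)*(2*n+1)) * ih

lemma Ee_zero (n : ℕ) (a : ℂ) : Ee n 0 a = ((2*n).descFactorial n : ℂ) * poch (a+1) n := by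
  rw [Ee, Finset.sum_range_succ']
  have h1 : ∀ e ∈ range n, (Aco n 0 (e+1) : ℂ) * poch (a+1) (n-(e+1)) = 0 := by
    intro e he
    have : Aco n 0 (e+1) = 0 := by
      rw [Aco]
      have : (0+2*(e+1)-2).choose (2*(e+1)) = 0 := Nat.choose_eq_zero_of_lt (by omega)
      rw [this, mul_zero]
    rw [this]
    simp
  rw [Finset.sum_congr rfl h1]
  simp [Aco]

theorem twoF1_neg2n_a_twoAp1 (n : ℕ) (a : ℂ) (h : ∀ k ≤ 2 * n, poch (2 * a + 1) k ≠ 0) :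
    ∑ k ∈ range (2 * n + 1),
        poch (-(2 * n : ℂ)) k * poch a k * 2 ^ k / (poch (2 * a + 1) k * (k.factorial : ℂ))
      = poch (1 / 2) n / poch (a + 1 / 2) n := by
  have hP : poch (2*a+1) (2*n) ≠ 0 := h (2*n) le_rfl
  have step1 : (∑ k ∈ range (2 * n + 1),
      poch (-(2 * n : ℂ)) k * poch a k * 2 ^ k / (poch (2 * a + 1) k * (k.factorial : ℂ)))
        * poch (2*a+1) (2*n) = Qs (2*n) a (2*a+1) := by
    rw [Finset.sum_mul, Qs]
    refine Finset.sum_congr rfl fun k hk => ?_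
    rw [mem_range] at hk
    have hsplit : poch (2*a+1) (2*n) = poch (2*a+1) k * poch (2*a+1+k) (2*n-k) := by
      rw [← poch_add]
      congr 1
      omega
    have hk2 : poch (2*a+1) k ≠ 0 := h k (by omega)
    have hkf : ((k.factorial : ℕ) : ℂ) ≠ 0 := Nat.cast_ne_zero.2 k.factorial_ne_zero
    have hcast : -(2*(n:ℂ)) = -(((2*n : ℕ)):ℂ) := by push_cast; ring
    rw [hcast, poch_neg (2*n) k (by omega)]
    have hdesc : (((2*n).descFactorial k : ℕ) : ℂ) = ((k.factorial : ℕ):ℂ) * (((2*n).choose k : ℕ) : ℂ) := by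
      exact_mod_cast congrArg (Nat.cast : ℕ → ℂ) (Nat.descFactorial_eq_factorial_mul_choose (2*n) k)
    have hneg2 : (-2 : ℂ)^k = (-1)^k * 2^k := by
      rw [← neg_one_mul, mul_pow]
    rw [hdesc, hsplit, hneg2]
    field_simp
  have step2 : Qs (2*n) a (2*a+1) = ((2*n).descFactorial n : ℂ) * poch (a+1) n := by
    have := (QE a n).1 0
    have h0 : a + ((0:ℕ):ℂ) = a := by push_cast; ring
    have h1 : 2*a+1+((0:ℕ):ℂ) = 2*a+1 := by push_cast; ring
    rw [h0, h1] at this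
    rw [this, Ee_zero]
  have hdb := poch_double a n
  have h12 : poch (a+1/2) n ≠ 0 := by
    intro hz
    rw [hdb, hz] at hP
    simp at hP
  have e1 : (∑ k ∈ range (2 * n + 1),
      poch (-(2 * n : ℂ)) k * poch a k * 2 ^ k / (poch (2 * a + 1) k * (k.factorial : ℂ)))
      = ((2*n).descFactorial n : ℂ) * poch (a+1) n / poch (2*a+1) (2*n) := by
    rw [eq_div_iff hP, step1, step2]
  have hfac : (((2*n).descFactorial n : ℕ) : ℂ) * ((n.factorial : ℕ) : ℂ) = (((2*n).factorial : ℕ) : ℂ) := by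
    have := Nat.factorial_mul_descFactorial (show n ≤ 2*n by omega)
    have h2 : 2*n - n = n := by omega
    rw [h2] at this
    rw [mul_comm] at this
    exact_mod_cast congrArg (Nat.cast : ℕ → ℂ) this
  have hnf : ((n.factorial : ℕ) : ℂ) ≠ 0 := Nat.cast_ne_zero.2 n.factorial_ne_zero
  have hhalf : poch (1/2) n * 4^n = (((2*n).descFactorial n : ℕ) : ℂ) := by
    have hh := poch_half n
    apply mul_right_cancel₀ hnf
    rw [hfac]
    exact_mod_cast hh
  have e2 : poch (1 / 2) n / poch (a + 1 / 2) n
      = ((2*n).descFactorial n : ℂ) * poch (a+1) n / poch (2*a+1) (2*n) := by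
    rw [div_eq_div_iff h12 hP, hdb]
    linear_combination (poch (a+1/2) n * poch (a+1) n) * hhalf
  rw [e1, e2]
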